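/- Let W be a nonempty separable topological space which is homeomorphic to the countable product W^ℕ = (ℕ → W) with the product topology. Then there exists a homeomorphism φ : W → W which has a fixed point, whose set of periodic points is dense in W, and such that (W, φ) is totally transitive: there exists w ∈ W such that for every k ≥ 1 the set {(φ^k)ⁿ(w) : n ≥ 1} is dense in W. -/
import Mathlib


open Topology

namespace Stmt14Aux

variable {W : Type} [TopologicalSpace W]

/-- The two-sided shift homeomorphism on `ℤ → W`. -/
def shift (W : Type) [TopologicalSpace W] : (ℤ → W) ≃ₜ (ℤ → W) where
  toFun f n := f (n + 1)
  invFun f n := f (n - 1)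
  left_inv f := funext fun n => by simp
  right_inv f := funext fun n => by simp
  continuous_toFun := continuous_pi fun n => continuous_apply _
  continuous_invFun := continuous_pi fun n => continuous_apply _

lemma shift_iterate (f : ℤ → W) (m : ℕ) :
    (⇑(shift W))^[m] f = fun n => f (n + m) := by
  induction m generalizing f with
  | zero => simp
  | succ m ih =>
    rw [Function.iterate_succ_apply, ih]
    funext n
    show f (n + m + 1) = f (n + (m + 1 : ℕ))
    congr 1
    push_cast
    ring

lemma dense_periodic :
    Dense {f : ℤ → W | ∃ m : ℕ, 0 < m ∧ (⇑(shift W))^[m] f = f} := by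
  rw [dense_iff_inter_open]
  rintro U hU ⟨g, hg⟩
  obtain ⟨I, u, hu, hsub⟩ := isOpen_pi_iff.mp hU g hg
  set N : ℕ := I.sup Int.natAbs with hN
  set m : ℕ := 2 * N + 1 with hm
  refine ⟨fun n => g ((n + N) % (m : ℤ) - N), ?_, ⟨m, by omega, ?_⟩⟩
  · apply hsub
    rw [Set.mem_pi]
    intro j hj
    have hjN : j.natAbs ≤ N := Finset.le_sup hj
    have h1 : (0:ℤ) ≤ j + N := by omega
    have h2 : j + (N:ℤ) < (m:ℤ) := by push_cast [hm]; omega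
    rw [Int.emod_eq_of_lt h1 h2]
    have : j + (N:ℤ) - N = j := by ring
    rw [this]
    exact (hu j hj).2
  · rw [shift_iterate]
    funext n
    have : n + (m:ℤ) + N = n + N + (m:ℤ) := by ring
    rw [this, Int.add_mul_emod_self_left (a := n + N) (b := (m:ℤ)) (c := 1) |>.symm]
    ring_nf

/-! ### The block construction of a totally transitive point -/

variable (req : ℕ → ℕ × ℕ × List ℕ)

def kk (i : ℕ) : ℕ := (req i).1 + 1
def nn (i : ℕ) : ℕ := (req i).2.1
def ll (i : ℕ) : List ℕ := (req i).2.2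

def B : ℕ → ℕ
  | 0 => 1
  | i + 1 => kk req i * (B i + nn req i) + nn req i + 1

def ctr (i : ℕ) : ℕ := kk req i * (B req i + nn req i)

lemma one_le_B : ∀ i, 1 ≤ B req i
  | 0 => le_refl _
  | i + 1 => by simp [B]

lemma le_ctr (i : ℕ) : B req i + nn req i ≤ ctr req i :=
  Nat.le_mul_of_pos_left _ (Nat.succ_pos _)

lemma ctr_lt_B (i : ℕ) : ctr req i + nn req i < B req (i + 1) := by
  simp [B, ctr]

lemma B_strictMono : StrictMono (B req) := by
  apply strictMono_nat_of_lt_succ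
  intro i
  have h1 := le_ctr req i
  have h2 := ctr_lt_B req i
  omega

def inWin (i : ℕ) (p : ℤ) : Prop :=
  (ctr req i : ℤ) - nn req i ≤ p ∧ p ≤ ctr req i + nn req i

lemma inWin_unique {i j : ℕ} {p : ℤ} (h1 : inWin req i p) (h2 : inWin req j p) :
    i = j := by
  have key : ∀ a b : ℕ, a < b → inWin req a p → inWin req b p → False := by
    intro a b hab ⟨_, ha2⟩ ⟨hb1, _⟩
    have h3 : ctr req a + nn req a < B req (a + 1) := ctr_lt_B req a
    have h4 : B req (a + 1) ≤ B req b := (B_strictMono req).monotone hab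
    have h5 : B req b + nn req b ≤ ctr req b := le_ctr req b
    -- p ≤ ctr a + nn a < B b ≤ ctr b - nn b ≤ p
    have : ((ctr req a : ℤ) + nn req a) < (ctr req b : ℤ) - nn req b := by
      push_cast
      omega
    omega
  rcases lt_trichotomy i j with h | h | h
  · exact absurd (key i j h h1 h2) not_false
  · exact h
  · exact absurd (key j i h h2 h1) not_false

open scoped Classical in
noncomputable def wSeq (d : ℕ → W) (p : ℤ) : W :=
  if h : ∃ i, inWin req i p then
    d ((ll req h.choose).getD (p - ctr req h.choose + nn req h.choose).toNat 0)
  else d 0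

lemma wSeq_eq (d : ℕ → W) (i : ℕ) (p : ℤ) (h : inWin req i p) :
    wSeq req d p = d ((ll req i).getD (p - ctr req i + nn req i).toNat 0) := by
  have hex : ∃ i, inWin req i p := ⟨i, h⟩
  unfold wSeq
  rw [dif_pos hex]
  obtain rfl : hex.choose = i := inWin_unique req hex.choose_spec h
  rfl

lemma wSeq_req (d : ℕ → W) (hsurj : Function.Surjective req) (k N : ℕ) (hk : 0 < k)
    (c : ℤ → ℕ) :
    ∃ n : ℕ, ∀ j : ℤ, -(N:ℤ) ≤ j → j ≤ (N:ℤ) →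
      wSeq req d (j + ((k * (n + 1) : ℕ) : ℤ)) = d (c j) := by
  obtain ⟨i, hi⟩ := hsurj (k - 1, N, (List.range (2 * N + 1)).map (fun t : ℕ => c ((t:ℤ) - (N:ℤ))))
  have hkk : kk req i = k := by simp only [kk, hi]; omega
  have hnn : nn req i = N := by simp only [nn, hi]
  have hll : ll req i = (List.range (2 * N + 1)).map (fun t : ℕ => c ((t:ℤ) - (N:ℤ))) := by
    simp only [ll, hi]
  have hB1 : 1 ≤ B req i := one_le_B req i
  refine ⟨B req i + N - 1, ?_⟩
  have hctr : k * (B req i + N - 1 + 1) = ctr req i := by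
    rw [ctr, hkk, hnn]
    congr 1
    omega
  intro j hj1 hj2
  have hwin : inWin req i (j + ((k * (B req i + N - 1 + 1) : ℕ) : ℤ)) := by
    rw [hctr]
    unfold inWin
    rw [hnn]
    omega
  rw [wSeq_eq req d i _ hwin]
  have hidx : (j + ((k * (B req i + N - 1 + 1) : ℕ) : ℤ) - ctr req i + nn req i) = j + N := by
    rw [hctr, hnn]
    push_cast
    ring
  rw [hidx]
  have hlt : (j + (N:ℤ)).toNat < 2 * N + 1 := by omega
  rw [hll, List.getD_eq_getElem?_getD, List.getElem?_map, List.getElem?_range hlt]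
  have hj : (((j + (N:ℤ)).toNat : ℤ) - (N:ℤ)) = j := by omega
  simp only [Option.map_some, Option.getD_some]
  rw [hj]

lemma exists_transitive [Nonempty W] [TopologicalSpace.SeparableSpace W] :
    ∃ w : ℤ → W, ∀ k : ℕ, 0 < k →
      Dense (Set.range fun n : ℕ => (⇑(shift W))^[k * (n + 1)] w) := by
  classical
  obtain ⟨req, hsurj⟩ := exists_surjective_nat (ℕ × ℕ × List ℕ)
  set d := TopologicalSpace.denseSeq W with hd'
  have hd : DenseRange d := TopologicalSpace.denseRange_denseSeq W
  refine ⟨wSeq req d, fun k hk => ?_⟩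
  rw [dense_iff_inter_open]
  rintro U hU ⟨g, hg⟩
  obtain ⟨I, u, hu, hsub⟩ := isOpen_pi_iff.mp hU g hg
  set N : ℕ := I.sup Int.natAbs with hN
  have hc : ∀ j : ℤ, j ∈ I → ∃ t, d t ∈ u j := fun j hj =>
    hd.exists_mem_open (hu j hj).1 ⟨g j, (hu j hj).2⟩
  choose! c hcmem using hc
  obtain ⟨n, hn⟩ := wSeq_req req d hsurj k N hk c
  refine ⟨(⇑(shift W))^[k * (n + 1)] (wSeq req d), ?_, ⟨n, rfl⟩⟩
  apply hsub
  rw [Set.mem_pi]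
  intro j hj
  have hjN : j.natAbs ≤ N := Finset.le_sup hj
  rw [shift_iterate]
  show wSeq req d (j + ((k * (n + 1) : ℕ) : ℤ)) ∈ u j
  rw [hn j (by omega) (by omega)]
  exact hcmem j hj

end Stmt14Aux

open Stmt14Aux in
/-- A nonempty separable space homeomorphic to its own countable power admits a totally
transitive homeomorphism with a fixed point and a dense set of periodic points. -/
theorem stmt14 (W : Type) [TopologicalSpace W] [Nonempty W]
    [TopologicalSpace.SeparableSpace W] (h : Nonempty (W ≃ₜ (ℕ → W))) :
    ∃ φ : W ≃ₜ W, (∃ x, φ x = x) ∧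
      Dense {x : W | ∃ m : ℕ, 0 < m ∧ (⇑φ)^[m] x = x} ∧
      ∃ w : W, ∀ k : ℕ, 0 < k → Dense (Set.range fun n : ℕ => (⇑φ)^[k * (n + 1)] w) := by
  obtain ⟨e0⟩ := h
  let e : W ≃ₜ (ℤ → W) :=
    e0.trans (Homeomorph.piCongrLeft (Y := fun _ => W) (Denumerable.eqv ℤ)).symm
  set φ : W ≃ₜ W := (e.trans (shift W)).trans e.symm with hφdef
  have hφ : ∀ x, φ x = e.symm ((shift W) (e x)) := fun x => rfl
  have hiter : ∀ (m : ℕ) (x : W), (⇑φ)^[m] x = e.symm ((⇑(shift W))^[m] (e x)) := by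
    intro m
    induction m with
    | zero => intro x; simp
    | succ m ih =>
      intro x
      rw [Function.iterate_succ_apply', Function.iterate_succ_apply', ih, hφ,
        e.apply_symm_apply]
  refine ⟨φ, ?_, ?_, ?_⟩
  · refine ⟨e.symm (fun _ => Classical.arbitrary W), ?_⟩
    rw [hφ, e.apply_symm_apply]
    rfl
  · have hset : {x : W | ∃ m : ℕ, 0 < m ∧ (⇑φ)^[m] x = x}
        = ⇑e ⁻¹' {f : ℤ → W | ∃ m : ℕ, 0 < m ∧ (⇑(shift W))^[m] f = f} := by
      ext x
      simp only [Set.mem_setOf_eq, Set.mem_preimage]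
      constructor
      · rintro ⟨m, hm, hx⟩
        refine ⟨m, hm, ?_⟩
        rw [hiter] at hx
        exact (e.symm_apply_eq).mp hx
      · rintro ⟨m, hm, hx⟩
        refine ⟨m, hm, ?_⟩
        rw [hiter, hx, e.symm_apply_apply]
    rw [hset]
    exact (dense_periodic (W := W)).preimage e.isOpenMap
  · obtain ⟨w, hw⟩ := exists_transitive (W := W)
    refine ⟨e.symm w, fun k hk => ?_⟩
    have hset : (Set.range fun n : ℕ => (⇑φ)^[k * (n + 1)] (e.symm w))
        = ⇑e ⁻¹' (Set.range fun n : ℕ => (⇑(shift W))^[k * (n + 1)] w) := by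
      ext x
      simp only [Set.mem_range, Set.mem_preimage]
      constructor
      · rintro ⟨n, rfl⟩
        exact ⟨n, by rw [hiter, e.apply_symm_apply, e.apply_symm_apply]⟩
      · rintro ⟨n, hn⟩
        exact ⟨n, by rw [hiter, e.apply_symm_apply, hn, e.symm_apply_apply]⟩
    rw [hset]
    exact (hw k hk).preimage e.isOpenMap
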